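/- The group with presentation on four generators a₁, b₁, a₂, b₂ with the ten relators a₁a₂⁻¹, a₁[a₁,b₁]a₂, [a₁,b₁], [a₂,b₂], b₁b₂a₂b₂, b₁b₂a₂a₁⁻¹a₂b₂a₁, b₁b₂a₂a₁⁻¹b₂⁻¹a₂⁻¹a₁b₁⁻¹, b₂b₁a₁b₁, b₂b₁a₁a₂⁻¹a₁b₁a₂, and b₂b₁a₁a₂⁻¹b₁⁻¹a₁⁻¹a₂b₂⁻¹ is isomorphic to the cyclic group ℤ/3ℤ. -/

import Mathlib

/-!
The group with presentation on generators a₁, b₁, a₂, b₂ and the ten relators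
a₁a₂⁻¹, a₁[a₁,b₁]a₂, [a₁,b₁], [a₂,b₂], b₁b₂a₂b₂, b₁b₂a₂a₁⁻¹a₂b₂a₁,
b₁b₂a₂a₁⁻¹b₂⁻¹a₂⁻¹a₁b₁⁻¹, b₂b₁a₁b₁, b₂b₁a₁a₂⁻¹a₁b₁a₂, b₂b₁a₁a₂⁻¹b₁⁻¹a₁⁻¹a₂b₂⁻¹
is isomorphic to ℤ/3ℤ.  Generators: a₁ = 0, b₁ = 1, a₂ = 2, b₂ = 3.
-/

namespace Stmt1

def a₁ : FreeGroup (Fin 4) := FreeGroup.of 0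
def b₁ : FreeGroup (Fin 4) := FreeGroup.of 1
def a₂ : FreeGroup (Fin 4) := FreeGroup.of 2
def b₂ : FreeGroup (Fin 4) := FreeGroup.of 3

def rels : Set (FreeGroup (Fin 4)) :=
  { a₁ * a₂⁻¹,
    a₁ * (a₁ * b₁ * a₁⁻¹ * b₁⁻¹) * a₂,
    a₁ * b₁ * a₁⁻¹ * b₁⁻¹,
    a₂ * b₂ * a₂⁻¹ * b₂⁻¹,
    b₁ * b₂ * a₂ * b₂,
    b₁ * b₂ * a₂ * a₁⁻¹ * a₂ * b₂ * a₁,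
    b₁ * b₂ * a₂ * a₁⁻¹ * b₂⁻¹ * a₂⁻¹ * a₁ * b₁⁻¹,
    b₂ * b₁ * a₁ * b₁,
    b₂ * b₁ * a₁ * a₂⁻¹ * a₁ * b₁ * a₂,
    b₂ * b₁ * a₁ * a₂⁻¹ * b₁⁻¹ * a₁⁻¹ * a₂ * b₂⁻¹ }

abbrev G := PresentedGroup rels

lemma rel_one {r : FreeGroup (Fin 4)} (h : r ∈ rels) : PresentedGroup.mk rels r = 1 :=
  (QuotientGroup.eq_one_iff r).2 (Subgroup.subset_normalClosure h)

abbrev A₁ : G := PresentedGroup.mk rels a₁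
abbrev B₁ : G := PresentedGroup.mk rels b₁
abbrev A₂ : G := PresentedGroup.mk rels a₂
abbrev B₂ : G := PresentedGroup.mk rels b₂

lemma h1 : A₁ * A₂⁻¹ = 1 := by simpa using rel_one (r := a₁ * a₂⁻¹) (by simp [rels])

lemma h3 : A₁ * B₁ * A₁⁻¹ * B₁⁻¹ = 1 := by
  simpa using rel_one (r := a₁ * b₁ * a₁⁻¹ * b₁⁻¹) (by simp [rels])

lemma h2 : A₁ * (A₁ * B₁ * A₁⁻¹ * B₁⁻¹) * A₂ = 1 := by
  simpa using rel_one (r := a₁ * (a₁ * b₁ * a₁⁻¹ * b₁⁻¹) * a₂) (by simp [rels])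

lemma h5 : B₁ * B₂ * A₂ * B₂ = 1 := by
  simpa using rel_one (r := b₁ * b₂ * a₂ * b₂) (by simp [rels])

lemma h6 : B₁ * B₂ * A₂ * A₁⁻¹ * A₂ * B₂ * A₁ = 1 := by
  simpa using rel_one (r := b₁ * b₂ * a₂ * a₁⁻¹ * a₂ * b₂ * a₁) (by simp [rels])

lemma h8 : B₂ * B₁ * A₁ * B₁ = 1 := by
  simpa using rel_one (r := b₂ * b₁ * a₁ * b₁) (by simp [rels])

lemma e1 : A₂ = A₁ := (mul_inv_eq_one.mp h1).symm

lemma e2 : A₁ * A₁ = 1 := by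
  have h := h2
  rw [h3, mul_one, e1] at h
  exact h

lemma hA1 : A₁ = 1 := by
  have h5' := h5
  have h6' := h6
  rw [e1] at h5' h6'
  have key : A₁ = (B₁ * B₂ * A₁ * B₂)⁻¹ * (B₁ * B₂ * A₁ * A₁⁻¹ * A₁ * B₂ * A₁) := by group
  rw [h5', h6'] at key
  simpa using key

lemma hB1 : B₁ * B₂ * B₂ = 1 := by
  have h := h5
  rw [e1, hA1, mul_one] at h
  exact h

lemma hB2 : B₂ * B₁ * B₁ = 1 := by
  have h := h8
  rw [hA1, mul_one] at h
  exact h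

lemma hb1 : B₁ = B₂⁻¹ * B₂⁻¹ := by
  have key : B₁ = (B₁ * B₂ * B₂) * (B₂⁻¹ * B₂⁻¹) := by group
  rw [hB1] at key
  simpa using key

lemma h9 : B₂ ^ 3 = 1 := by
  have key : B₂ ^ 3 = (B₂ * B₁ * B₁)⁻¹ := by rw [hb1]; group
  rw [hB2] at key
  simpa using key

lemma hbeq : B₁ = B₂ := by
  have key : B₂⁻¹ * B₂⁻¹ = (B₂ ^ 3)⁻¹ * B₂ := by group
  rw [h9] at key
  rw [hb1, key, inv_one, one_mul]

def f : Fin 4 → Multiplicative (ZMod 3) :=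
  ![1, Multiplicative.ofAdd 1, 1, Multiplicative.ofAdd 1]

lemma hf : ∀ r ∈ rels, FreeGroup.lift f r = 1 := by
  intro r hr
  simp only [rels, Set.mem_insert_iff, Set.mem_singleton_iff] at hr
  rcases hr with rfl|rfl|rfl|rfl|rfl|rfl|rfl|rfl|rfl|rfl <;>
    simp [a₁, b₁, a₂, b₂, f] <;> decide

def φ : G →* Multiplicative (ZMod 3) := PresentedGroup.toGroup hf

def ψ : Multiplicative (ZMod 3) →* G :=
  MonoidHom.mk' (fun x => B₂ ^ (Multiplicative.toAdd x).val)
    (by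
      intro x y
      have key : ∀ n : ℕ, B₂ ^ (n % 3) = B₂ ^ n := fun n => (pow_eq_pow_mod n h9).symm
      show B₂ ^ (Multiplicative.toAdd x + Multiplicative.toAdd y).val = _
      rw [ZMod.val_add, key, pow_add])

lemma comp1 : ψ.comp φ = MonoidHom.id G := by
  apply PresentedGroup.ext
  intro x
  fin_cases x
  · show ψ (φ A₁) = A₁
    rw [hA1, map_one, map_one]
  · show ψ (φ B₁) = B₁
    have : φ B₁ = Multiplicative.ofAdd 1 := PresentedGroup.toGroup.of hf (x := 1)
    rw [this, hbeq]
    show B₂ ^ (1 : ZMod 3).val = B₂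
    rw [show (1 : ZMod 3).val = 1 from rfl, pow_one]
  · show ψ (φ A₂) = A₂
    rw [e1, hA1, map_one, map_one]
  · show ψ (φ B₂) = B₂
    have : φ B₂ = Multiplicative.ofAdd 1 := PresentedGroup.toGroup.of hf (x := 3)
    rw [this]
    show B₂ ^ (1 : ZMod 3).val = B₂
    rw [show (1 : ZMod 3).val = 1 from rfl, pow_one]

lemma comp2 : φ.comp ψ = MonoidHom.id (Multiplicative (ZMod 3)) := by
  ext x
  show φ (B₂ ^ (Multiplicative.toAdd x).val) = x
  have hb : φ B₂ = Multiplicative.ofAdd 1 := PresentedGroup.toGroup.of hf (x := 3)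
  rw [map_pow, hb]
  have : ∀ n : ℕ, (Multiplicative.ofAdd (1 : ZMod 3)) ^ n = Multiplicative.ofAdd (n : ZMod 3) := by
    intro n
    rw [← ofAdd_nsmul]
    norm_num
  rw [this]
  exact congrArg Multiplicative.ofAdd (ZMod.natCast_zmod_val (Multiplicative.toAdd x))

theorem pi1_X_theta :
    Nonempty (PresentedGroup rels ≃* Multiplicative (ZMod 3)) :=
  ⟨MonoidHom.toMulEquiv φ ψ comp1 comp2⟩

end Stmt1
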